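/- It holds that Σ_{C∈𝒩} (2 − x*(C))·v^C = L_p, and L_p ≤ I_p componentwise. -/

import Mathlib

open Finset
open scoped Classical symmDiff

/-- A multigraph on vertex type `V` with edge type `E`, given by the two endpoints
of each edge. -/
structure MultiGraph (V E : Type*) where
  fst : E → V
  snd : E → V

namespace MultiGraph

variable {V E : Type*} [Fintype V] [DecidableEq V] [Fintype E] [DecidableEq E]
variable (G : MultiGraph V E)

/-- The cut `δ(U)`: the set of edges with exactly one endpoint in `U`. -/
noncomputable def cut (U : Finset V) : Finset E :=
  univ.filter fun e => (G.fst e ∈ U ∧ G.snd e ∉ U) ∨ (G.fst e ∉ U ∧ G.snd e ∈ U)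

/-- The degree of `v` with respect to the edge multiset `F`. -/
def deg (F : Multiset E) (v : V) : ℕ :=
  (F.map fun e => (if G.fst e = v then 1 else 0) + (if G.snd e = v then 1 else 0)).sum

/-- `odd(F)`: the set of vertices of odd degree in `(V, F)`. -/
noncomputable def oddVerts (F : Multiset E) : Finset V :=
  univ.filter fun v => Odd (G.deg F v)

/-- Adjacency via an edge satisfying the predicate `P`. -/
def Adj (P : E → Prop) (a b : V) : Prop :=
  ∃ e, P e ∧ ((G.fst e = a ∧ G.snd e = b) ∨ (G.fst e = b ∧ G.snd e = a))

/-- `(V, {e | P e})` is a connected (spanning) subgraph. -/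
def ConnectedOn (P : E → Prop) : Prop :=
  ∀ u w : V, Relation.ReflTransGen (G.Adj P) u w

/-- The graph `G` is connected. -/
def Connected : Prop := G.ConnectedOn fun _ => True

/-- A `T`-tour: a multi-subset `F` of the edges such that `(V, F)` is connected and
`odd(F) = T`. -/
def IsTTour (T : Finset V) (F : Multiset E) : Prop :=
  G.ConnectedOn (· ∈ F) ∧ G.oddVerts F = T

/-- `S` is the edge set of a spanning tree of `G`. -/
def IsSpanningTree (S : Finset E) : Prop :=
  G.ConnectedOn (· ∈ S) ∧ S.card + 1 = Fintype.card V

/-- `δ(𝒲)`: the set of edges whose endpoints lie in different parts of the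
partition `𝒲` of `V`. -/
noncomputable def partitionCut (W : Finpartition (univ : Finset V)) : Finset E :=
  univ.filter fun e => ∀ P ∈ W.parts, ¬(G.fst e ∈ P ∧ G.snd e ∈ P)

/-- Feasibility for the standard LP relaxation of the `T`-tour problem. -/
def LPFeasible (T : Finset V) (x : E → ℝ) : Prop :=
  (∀ e, 0 ≤ x e) ∧
  (∀ U : Finset V, U.Nonempty → U ≠ univ → Even ((T ∩ U).card) →
    2 ≤ ∑ e ∈ G.cut U, x e) ∧
  (∀ W : Finpartition (univ : Finset V),
    (W.parts.card : ℝ) - 1 ≤ ∑ e ∈ G.partitionCut W, x e)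

/-- `C` is a cut of `G`, i.e. `C = δ(U)` for some nonempty proper `U ⊆ V`. -/
def IsCut (C : Finset E) : Prop :=
  ∃ U : Finset V, U.Nonempty ∧ U ≠ univ ∧ C = G.cut U

/-- A narrow cut: a cut `C` with `x(C) < 2`. -/
def Narrow (x : E → ℝ) (C : Finset E) : Prop :=
  G.IsCut C ∧ ∑ e ∈ C, x e < 2

/-- `𝒩`: the set of narrow cuts. -/
noncomputable def narrowCuts (x : E → ℝ) : Finset (Finset E) :=
  univ.filter fun C => G.Narrow x C

/-- A narrow cut `C` is lonely for `S` if `|S ∩ C| = 1`. -/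
def Lonely (x : E → ℝ) (S C : Finset E) : Prop :=
  G.Narrow x C ∧ (S ∩ C).card = 1

/-- `ℒ_S`: the set of lonely cuts of `S`. -/
noncomputable def lonelyCuts (x : E → ℝ) (S : Finset E) : Finset (Finset E) :=
  univ.filter fun C => G.Lonely x S C

/-- `L_S = ∪_{C ∈ ℒ_S} (S ∩ C)`: the set of lonely edges of `S`. -/
noncomputable def lonelyEdges (x : E → ℝ) (S : Finset E) : Finset E :=
  S.filter fun e => ∃ C, G.Lonely x S C ∧ e ∈ C

/-- The incidence vector `χ^F` of an edge set `F`. -/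
def chi (F : Finset E) : E → ℝ := fun e => if e ∈ F then 1 else 0

/-- The vector `v^C = (1/(2 - x(C))) · Σ_{S : C ∈ ℒ_S} p_S · χ^{S ∩ C}`. -/
noncomputable def vC (x : E → ℝ) (p : Finset E → ℝ) (C : Finset E) : E → ℝ :=
  fun e => (1 / (2 - ∑ f ∈ C, x f)) *
    ∑ S : Finset E, (if G.Lonely x S C then p S else 0) * chi (S ∩ C) e

/-- The modified cost
`c^S(e) = c(e) + 2·(Σ_{C ∈ ℒ_S : e ∈ C} c(S ∩ C) − max_{C ∈ ℒ_S : e ∈ C} c(S ∩ C))`,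
where the maximum over the empty set is `0`. -/
noncomputable def modCost (c x : E → ℝ) (S : Finset E) (e : E) : ℝ :=
  c e + 2 * ((∑ C ∈ (G.lonelyCuts x S).filter (fun C => e ∈ C), ∑ f ∈ S ∩ C, c f)
    - (if h : ((G.lonelyCuts x S).filter (fun C => e ∈ C)).Nonempty
        then ((G.lonelyCuts x S).filter (fun C => e ∈ C)).sup' h (fun C => ∑ f ∈ S ∩ C, c f)
        else 0))

/-- The set of vertices reachable from `v` using edges satisfying `P`. -/
noncomputable def reachSet (P : E → Prop) (v : V) : Finset V :=
  univ.filter fun w => Relation.ReflTransGen (G.Adj P) v w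

end MultiGraph

namespace MultiGraph

variable {V E : Type*} [Fintype V] [DecidableEq V] [Fintype E] [DecidableEq E]

lemma cut_compl (G : MultiGraph V E) (U : Finset V) : G.cut Uᶜ = G.cut U := by
  ext e
  simp only [cut, mem_filter, mem_univ, true_and, Finset.mem_compl]
  tauto

lemma reach_subset (G : MultiGraph V E) (S : Finset E) (e : E) (U : Finset V)
    (hSC : S ∩ G.cut U = {e}) {z : V} (hz : z ∈ U) :
    G.reachSet (fun f => f ∈ S ∧ f ≠ e) z ⊆ U := by
  intro w hw
  simp only [reachSet, mem_filter, mem_univ, true_and] at hw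
  induction hw with
  | refl => exact hz
  | tail _ hadj ih =>
    obtain ⟨f, ⟨hfS, hfe⟩, hor⟩ := hadj
    have hfc : f ∉ G.cut U := by
      intro hc
      have : f ∈ S ∩ G.cut U := mem_inter.2 ⟨hfS, hc⟩
      rw [hSC, mem_singleton] at this
      exact hfe this
    simp only [cut, mem_filter, mem_univ, true_and] at hfc
    rcases hor with ⟨h1, h2⟩ | ⟨h1, h2⟩ <;> subst h1 <;> subst h2 <;> tauto

lemma reach_cover (G : MultiGraph V E) (S : Finset E) (e : E)
    (hconn : G.ConnectedOn (· ∈ S)) (w : V) :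
    w ∈ G.reachSet (fun f => f ∈ S ∧ f ≠ e) (G.fst e) ∨
    w ∈ G.reachSet (fun f => f ∈ S ∧ f ≠ e) (G.snd e) := by
  have h := hconn (G.fst e) w
  induction h with
  | refl =>
    left
    simp only [reachSet, mem_filter, mem_univ, true_and]
    exact Relation.ReflTransGen.refl
  | tail _ hadj ih =>
    obtain ⟨f, hfS, hor⟩ := hadj
    by_cases hfe : f = e
    · subst hfe
      rcases hor with ⟨h1, h2⟩ | ⟨h1, h2⟩ <;>
        [(right; rw [← h2]); (left; rw [← h1])] <;>
      · simp only [reachSet, mem_filter, mem_univ, true_and]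
        exact Relation.ReflTransGen.refl
    · rcases ih with h | h <;> [left; right] <;>
      · simp only [reachSet, mem_filter, mem_univ, true_and] at h ⊢
        exact h.tail ⟨f, ⟨hfS, hfe⟩, hor⟩

lemma eq_reach (G : MultiGraph V E) (S : Finset E) (e : E)
    (hconn : G.ConnectedOn (· ∈ S)) (U : Finset V)
    (hU : S ∩ G.cut U = {e}) (ha : G.fst e ∈ U) (hb : G.snd e ∉ U) :
    U = G.reachSet (fun f => f ∈ S ∧ f ≠ e) (G.fst e) := by
  apply Finset.Subset.antisymm
  · intro w hw
    rcases reach_cover G S e hconn w with h | h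
    · exact h
    · exfalso
      have hUc : S ∩ G.cut Uᶜ = {e} := by rw [cut_compl]; exact hU
      have := reach_subset G S e Uᶜ hUc (Finset.mem_compl.2 hb) h
      exact (Finset.mem_compl.1 this) hw
  · exact reach_subset G S e U hU ha

lemma cut_eq_cut_reach (G : MultiGraph V E) (S : Finset E) (e : E)
    (hconn : G.ConnectedOn (· ∈ S)) (U : Finset V)
    (hU : S ∩ G.cut U = {e}) (heU : e ∈ G.cut U) :
    G.cut U = G.cut (G.reachSet (fun f => f ∈ S ∧ f ≠ e) (G.fst e)) := by
  simp only [cut, mem_filter, mem_univ, true_and] at heU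
  rcases heU with ⟨ha, hb⟩ | ⟨ha, hb⟩
  · rw [← eq_reach G S e hconn U hU ha hb]
  · rw [← cut_compl G U,
      eq_reach G S e hconn Uᶜ (by rw [cut_compl]; exact hU)
        (Finset.mem_compl.2 ha) (by simp [Finset.mem_compl, hb])]

lemma natCast_zmod_two (n : ℕ) : (n : ZMod 2) = if Odd n then 1 else 0 := by
  rw [← ZMod.natCast_mod]
  rcases Nat.even_or_odd n with h | h
  · simp [Nat.even_iff.mp h, Nat.not_odd_iff_even.mpr h]
  · simp [Nat.odd_iff.mp h, h]

lemma parity_cut (G : MultiGraph V E) (F : Finset E) (U : Finset V) :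
    (F ∩ G.cut U).card % 2 = ((G.oddVerts F.val) ∩ U).card % 2 := by
  rw [← Nat.ModEq, ← ZMod.natCast_eq_natCast_iff]
  have hdeg : ∀ v, G.deg F.val v =
      ∑ f ∈ F, ((if G.fst f = v then 1 else 0) + (if G.snd f = v then 1 else 0)) := by
    intro v; rfl
  have stepA : ∑ v ∈ U, ((G.deg F.val v : ℕ) : ZMod 2) =
      ∑ f ∈ F, ((if G.fst f ∈ U then (1 : ZMod 2) else 0) +
        (if G.snd f ∈ U then (1 : ZMod 2) else 0)) := by
    have h1 : ∀ v, ((G.deg F.val v : ℕ) : ZMod 2) =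
        ∑ f ∈ F, ((if G.fst f = v then (1 : ZMod 2) else 0) +
          (if G.snd f = v then (1 : ZMod 2) else 0)) := by
      intro v
      rw [hdeg v]
      push_cast
      apply Finset.sum_congr rfl
      intro f _
      split_ifs <;> norm_num
    simp only [h1]
    rw [Finset.sum_comm]
    apply Finset.sum_congr rfl
    intro f _
    rw [Finset.sum_add_distrib, Finset.sum_ite_eq U (G.fst f) (fun _ => (1 : ZMod 2)),
      Finset.sum_ite_eq U (G.snd f) (fun _ => (1 : ZMod 2))]
  have stepB : ((F ∩ G.cut U).card : ZMod 2) =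
      ∑ f ∈ F, ((if G.fst f ∈ U then (1 : ZMod 2) else 0) +
        (if G.snd f ∈ U then (1 : ZMod 2) else 0)) := by
    have h2 : F ∩ G.cut U = F.filter (fun f => f ∈ G.cut U) := by
      ext f; simp [mem_inter, mem_filter]
    rw [h2, Finset.card_filter]
    push_cast
    apply Finset.sum_congr rfl
    intro f _
    simp only [cut, mem_filter, mem_univ, true_and]
    by_cases hf : G.fst f ∈ U <;> by_cases hs : G.snd f ∈ U <;> simp [hf, hs] <;> decide
  have stepC : ∑ v ∈ U, ((G.deg F.val v : ℕ) : ZMod 2) =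
      (((G.oddVerts F.val) ∩ U).card : ZMod 2) := by
    have h3 : (G.oddVerts F.val) ∩ U = U.filter (fun v => Odd (G.deg F.val v)) := by
      ext v
      simp only [oddVerts, mem_inter, mem_filter, mem_univ, true_and]
      tauto
    rw [h3, Finset.card_filter]
    push_cast
    apply Finset.sum_congr rfl
    intro v _
    rw [natCast_zmod_two]
  rw [stepB, ← stepA, stepC]

lemma inter_eq_singleton (S C : Finset E) (e : E) (hcard : (S ∩ C).card = 1)
    (heS : e ∈ S) (heC : e ∈ C) : S ∩ C = {e} := by
  obtain ⟨a, ha⟩ := Finset.card_eq_one.mp hcard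
  have : e ∈ S ∩ C := mem_inter.2 ⟨heS, heC⟩
  rw [ha, mem_singleton] at this
  rw [ha, this]

lemma lonely_count (G : MultiGraph V E) (x : E → ℝ) (S : Finset E)
    (hconn : G.ConnectedOn (· ∈ S)) (e : E) :
    ∑ C ∈ G.narrowCuts x, (if G.Lonely x S C ∧ e ∈ S ∩ C then (1 : ℝ) else 0) =
      chi (G.lonelyEdges x S) e := by
  rw [← Finset.sum_filter, Finset.sum_const, nsmul_eq_mul, mul_one]
  by_cases he : e ∈ G.lonelyEdges x S
  · simp only [lonelyEdges, mem_filter] at he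
    obtain ⟨heS, C₀, hC₀, heC₀⟩ := he
    have hfeq : (G.narrowCuts x).filter (fun C => G.Lonely x S C ∧ e ∈ S ∩ C) = {C₀} := by
      ext C
      simp only [mem_filter, mem_singleton, narrowCuts, mem_univ, true_and]
      constructor
      · rintro ⟨-, hC, heSC⟩
        obtain ⟨U, -, -, hCU⟩ := hC.1.1
        obtain ⟨U₀, -, -, hC₀U⟩ := hC₀.1.1
        have heC : e ∈ C := (mem_inter.1 heSC).2
        have h1 : S ∩ G.cut U = {e} := by
          rw [← hCU]; exact inter_eq_singleton S C e hC.2 heS heC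
        have h2 : S ∩ G.cut U₀ = {e} := by
          rw [← hC₀U]; exact inter_eq_singleton S C₀ e hC₀.2 heS heC₀
        rw [hCU, hC₀U]
        rw [cut_eq_cut_reach G S e hconn U h1 (hCU ▸ heC),
          cut_eq_cut_reach G S e hconn U₀ h2 (hC₀U ▸ heC₀)]
      · rintro rfl
        exact ⟨hC₀.1, hC₀, mem_inter.2 ⟨heS, heC₀⟩⟩
    have hmem : e ∈ G.lonelyEdges x S := by
      simp only [lonelyEdges, mem_filter]
      exact ⟨heS, C₀, hC₀, heC₀⟩
    rw [hfeq]
    simp [chi, hmem]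
  · have hfeq : (G.narrowCuts x).filter (fun C => G.Lonely x S C ∧ e ∈ S ∩ C) = ∅ := by
      ext C
      simp only [mem_filter, Finset.notMem_empty, iff_false, not_and]
      intro _ hC heSC
      apply he
      simp only [lonelyEdges, mem_filter]
      exact ⟨(mem_inter.1 heSC).1, C, hC, (mem_inter.1 heSC).2⟩
    rw [hfeq]
    simp [chi, he]

/-- `Σ_{C ∈ 𝒩} (2 − x*(C))·v^C = L_p`, and `L_p ≤ I_p`
componentwise, where `L_p := Σ_S p_S·χ^{L_S}` and `I_p := Σ_S p_S·χ^{I_S}`. -/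
theorem lonely_vector_identity (G : MultiGraph V E) (hG : G.Connected)
    (T : Finset V) (hT : Even T.card) (x : E → ℝ) (hx : G.LPFeasible T x)
    (p : Finset E → ℝ) (hp0 : ∀ S, 0 ≤ p S)
    (hptree : ∀ S, p S ≠ 0 → G.IsSpanningTree S)
    (hpsum : ∑ S : Finset E, p S = 1)
    (hdom : ∀ e, ∑ S : Finset E, p S * chi S e ≤ x e)
    (I : Finset E → Finset E)
    (hI : ∀ S, p S ≠ 0 → I S ⊆ S ∧ G.oddVerts (I S).val = T) :
    (∀ e, ∑ C ∈ G.narrowCuts x, (2 - ∑ f ∈ C, x f) * G.vC x p C e =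
      ∑ S : Finset E, p S * chi (G.lonelyEdges x S) e) ∧
    (∀ e, (∑ S : Finset E, p S * chi (G.lonelyEdges x S) e) ≤
      ∑ S : Finset E, p S * chi (I S) e) := by
  constructor
  · intro e
    have hstep : ∀ C ∈ G.narrowCuts x,
        (2 - ∑ f ∈ C, x f) * G.vC x p C e =
          ∑ S : Finset E, (if G.Lonely x S C then p S else 0) * chi (S ∩ C) e := by
      intro C hC
      rw [narrowCuts, Finset.mem_filter] at hC
      simp only [Finset.mem_univ, true_and, Narrow] at hC
      have hne : (2 - ∑ f ∈ C, x f) ≠ 0 := by linarith [hC.2]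
      simp only [vC]
      rw [← mul_assoc, mul_one_div, div_self hne, one_mul]
    rw [Finset.sum_congr rfl hstep, Finset.sum_comm]
    apply Finset.sum_congr rfl
    intro S _
    by_cases hS : p S = 0
    · simp [hS]
    · have hconn := (hptree S hS).1
      have hterm : ∀ C ∈ G.narrowCuts x,
          (if G.Lonely x S C then p S else 0) * chi (S ∩ C) e =
            p S * (if G.Lonely x S C ∧ e ∈ S ∩ C then (1 : ℝ) else 0) := by
        intro C _
        by_cases h1 : G.Lonely x S C <;> by_cases h2 : e ∈ S ∩ C <;>
          simp [h1, h2, chi]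
      rw [Finset.sum_congr rfl hterm, ← Finset.mul_sum, lonely_count G x S hconn e]
  · intro e
    apply Finset.sum_le_sum
    intro S _
    by_cases hS : p S = 0
    · simp [hS]
    · apply mul_le_mul_of_nonneg_left _ (hp0 S)
      by_cases he : e ∈ G.lonelyEdges x S
      · -- show e ∈ I S
        simp only [lonelyEdges, mem_filter] at he
        obtain ⟨heS, C, hC, heC⟩ := he
        obtain ⟨⟨⟨U, hUne, hUuniv, hCU⟩, hxC⟩, hcard⟩ := hC
        -- T ∩ U has odd cardinality
        have hodd : ¬ Even ((T ∩ U).card) := by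
          intro heven
          have := hx.2.1 U hUne hUuniv heven
          rw [← hCU] at this
          linarith
        obtain ⟨hIsub, hIodd⟩ := hI S hS
        -- parity
        have hpar := parity_cut G (I S) U
        rw [hIodd] at hpar
        have hISC : (I S ∩ G.cut U).card % 2 = 1 := by
          rw [hpar, ← Nat.odd_iff]
          exact Nat.odd_iff.2 (by
            rcases Nat.even_or_odd ((T ∩ U).card) with h | h
            · exact absurd h hodd
            · exact Nat.odd_iff.1 h)
        have hne : (I S ∩ G.cut U).Nonempty := by
          rw [Finset.nonempty_iff_ne_empty]
          intro hemp
          rw [hemp] at hISC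
          simp at hISC
        obtain ⟨f, hf⟩ := hne
        have hfI : f ∈ I S := (mem_inter.1 hf).1
        have hfC : f ∈ G.cut U := (mem_inter.1 hf).2
        have hSC : S ∩ C = {e} := inter_eq_singleton S C e hcard heS heC
        have hfSC : f ∈ S ∩ C := by
          rw [hCU]; exact mem_inter.2 ⟨hIsub hfI, hfC⟩
        rw [hSC, mem_singleton] at hfSC
        rw [← hfSC]
        simp only [chi, if_pos hfI]
        split_ifs <;> norm_num
      · simp only [chi, if_neg he]
        split_ifs <;> norm_num

end MultiGraph
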